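/- Let ε > 0, Ω > 0, λ > 0, and suppose ψ ∈ ℓ²(ℤ) satisfies −ε(ψ_{n−1} − 2ψ_n + ψ_{n+1}) + Ω ψ_n = λ ψ_n³ for all n ∈ ℤ. If Σ_{n∈ℤ} ψ_n² < Ω/(3λ), then ψ_n = 0 for all n; that is, there exists no nontrivial forced solution of power less than P_min(Ω, λ) = Ω/(3λ). -/

import Mathlib

noncomputable section

/-- Excitation threshold for forced solutions on the infinite one-dimensional lattice:
if `ψ ∈ ℓ²(ℤ)` solves `-ε(ψ_{n-1} - 2ψ_n + ψ_{n+1}) + Ω ψ_n = λ ψ_n³` and its power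
satisfies `Σ_n ψ_n² < Ω/(3λ)`, then `ψ ≡ 0`. -/
theorem lattice_forced_solution_threshold (ε Ω lam : ℝ)
    (hε : 0 < ε) (hΩ : 0 < Ω) (hlam : 0 < lam)
    (ψ : ℤ → ℝ) (hψ : Memℓp ψ 2)
    (heq : ∀ n : ℤ,
      -ε * (ψ (n - 1) - 2 * ψ n + ψ (n + 1)) + Ω * ψ n = lam * ψ n ^ 3)
    (hpow : ∑' n : ℤ, ψ n ^ 2 < Ω / (3 * lam)) :
    ∀ n : ℤ, ψ n = 0 := by
  -- summability of squares
  have hP : Summable (fun n : ℤ => ψ n ^ 2) := by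
    have := hψ.summable (p := 2) (by simp : 0 < (2:ENNReal).toReal)
    have h2 : (2:ENNReal).toReal = (2:ℝ) := by simp
    rw [h2] at this
    simpa [Real.rpow_two, Real.norm_eq_abs, sq_abs] using this
  set P : ℝ := ∑' n : ℤ, ψ n ^ 2 with hPdef
  have hPnonneg : 0 ≤ P := tsum_nonneg (fun n => sq_nonneg _)
  -- shifted squares summable with same tsum
  have hPm : Summable (fun n : ℤ => ψ (n - 1) ^ 2) :=
    ((Equiv.subRight (1:ℤ)).summable_iff (f := fun n : ℤ => ψ n ^ 2)).2 hP
  have hPp : Summable (fun n : ℤ => ψ (n + 1) ^ 2) :=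
    ((Equiv.addRight (1:ℤ)).summable_iff (f := fun n : ℤ => ψ n ^ 2)).2 hP
  have hPmsum : ∑' n : ℤ, ψ (n - 1) ^ 2 = P :=
    (Equiv.subRight (1:ℤ)).tsum_eq (f := fun n : ℤ => ψ n ^ 2)
  have hPpsum : ∑' n : ℤ, ψ (n + 1) ^ 2 = P :=
    (Equiv.addRight (1:ℤ)).tsum_eq (f := fun n : ℤ => ψ n ^ 2)
  -- cross terms summable
  have habs : ∀ (a b : ℝ), |a * b| ≤ (a ^ 2 + b ^ 2) / 2 := by
    intro a b
    nlinarith [sq_nonneg (|a| - |b|), abs_mul a b, abs_nonneg (a*b), sq_abs a, sq_abs b]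
  have hSm : Summable (fun n : ℤ => ψ (n - 1) * ψ n) := by
    apply Summable.of_abs
    apply Summable.of_nonneg_of_le (fun n => abs_nonneg _)
      (fun n => habs (ψ (n-1)) (ψ n))
    exact ((hPm.add hP).div_const 2)
  have hSp : Summable (fun n : ℤ => ψ (n + 1) * ψ n) := by
    apply Summable.of_abs
    apply Summable.of_nonneg_of_le (fun n => abs_nonneg _)
      (fun n => habs (ψ (n+1)) (ψ n))
    exact ((hPp.add hP).div_const 2)
  set Sm : ℝ := ∑' n : ℤ, ψ (n - 1) * ψ n
  set Sp : ℝ := ∑' n : ℤ, ψ (n + 1) * ψ n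
  -- cross terms bounded by P
  have hSmle : Sm ≤ P := by
    calc Sm ≤ ∑' n : ℤ, (ψ (n - 1) ^ 2 + ψ n ^ 2) / 2 := by
          apply Summable.tsum_le_tsum _ hSm ((hPm.add hP).div_const 2)
          intro n
          exact (le_abs_self _).trans (habs _ _)
      _ = P := by
          rw [tsum_div_const, Summable.tsum_add hPm hP, hPmsum]
          ring
  have hSple : Sp ≤ P := by
    calc Sp ≤ ∑' n : ℤ, (ψ (n + 1) ^ 2 + ψ n ^ 2) / 2 := by
          apply Summable.tsum_le_tsum _ hSp ((hPp.add hP).div_const 2)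
          intro n
          exact (le_abs_self _).trans (habs _ _)
      _ = P := by
          rw [tsum_div_const, Summable.tsum_add hPp hP, hPpsum]
          ring
  -- fourth powers
  have hbound : ∀ n : ℤ, ψ n ^ 2 ≤ P := fun n => Summable.le_tsum hP n (fun m _ => sq_nonneg _)
  have hQ : Summable (fun n : ℤ => ψ n ^ 4) := by
    apply Summable.of_nonneg_of_le (fun n => by positivity)
      (fun n => ?_) (hP.mul_left P)
    have : ψ n ^ 4 = ψ n ^ 2 * ψ n ^ 2 := by ring
    rw [this]
    exact mul_le_mul_of_nonneg_right (hbound n) (sq_nonneg _)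
  set Q : ℝ := ∑' n : ℤ, ψ n ^ 4
  have hQle : Q ≤ P * P := by
    calc Q ≤ ∑' n : ℤ, P * ψ n ^ 2 := by
          apply Summable.tsum_le_tsum _ hQ (hP.mul_left P)
          intro n
          have h4 : ψ n ^ 4 = ψ n ^ 2 * ψ n ^ 2 := by ring
          rw [h4]
          exact mul_le_mul_of_nonneg_right (hbound n) (sq_nonneg _)
      _ = P * P := by rw [tsum_mul_left]
  -- main identity: sum ψ_n * (eq_n)
  have hident : ε * (2 * P - Sm - Sp) + Ω * P = lam * Q := by
    have hpt : ∀ n : ℤ,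
        ε * (2 * (ψ n ^ 2) - ψ (n - 1) * ψ n - ψ (n + 1) * ψ n) + Ω * ψ n ^ 2
          = lam * ψ n ^ 4 := by
      intro n
      have := congrArg (· * ψ n) (heq n)
      nlinarith [this]
    have hsummand : Summable (fun n : ℤ =>
        ε * (2 * (ψ n ^ 2) - ψ (n - 1) * ψ n - ψ (n + 1) * ψ n) + Ω * ψ n ^ 2) :=
      (((hP.mul_left 2).sub hSm).sub hSp).mul_left ε |>.add (hP.mul_left Ω)
    have h1 : ∑' n : ℤ,
        (ε * (2 * (ψ n ^ 2) - ψ (n - 1) * ψ n - ψ (n + 1) * ψ n) + Ω * ψ n ^ 2)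
        = lam * Q := by
      rw [tsum_congr (fun n => hpt n), tsum_mul_left]
    rw [← h1, Summable.tsum_add ((((hP.mul_left 2).sub hSm).sub hSp).mul_left ε) (hP.mul_left Ω),
      tsum_mul_left, tsum_mul_left, Summable.tsum_sub ((hP.mul_left 2).sub hSm) hSp,
      Summable.tsum_sub (hP.mul_left 2) hSm, tsum_mul_left]
  -- conclude P must be 0
  have hQP : Ω * P ≤ lam * (P * P) := by
    have h0 : 0 ≤ ε * (2 * P - Sm - Sp) := by
      apply mul_nonneg hε.le
      linarith
    have := hident
    nlinarith [mul_le_mul_of_nonneg_left hQle hlam.le]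
  have hPzero : P = 0 := by
    by_contra hne
    have hPpos : 0 < P := lt_of_le_of_ne hPnonneg (Ne.symm hne)
    have : Ω ≤ lam * P := by
      have := hQP
      nlinarith
    have hlt : P * (3 * lam) < Ω := (lt_div_iff₀ (by positivity)).1 hpow
    nlinarith
  intro n
  have h1 : ψ n ^ 2 ≤ 0 := hPzero ▸ hbound n
  have := sq_nonneg (ψ n)
  have : ψ n ^ 2 = 0 := le_antisymm h1 this
  exact pow_eq_zero_iff (by norm_num) |>.1 this
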